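/- arXiv:2209.07097 — 3 statements merged into one kernel-verified Lean document; each statement's English description precedes it below -/
import Mathlib

section
/- Let M > 0, δ > 0, and F < Fsing_M(δ) where Fsing_M(δ) = Mδ for 0 < δ ≤ 2M and Fsing_M(δ) = M² + δ²/4 for δ > 2M. Then the function F ↦ ∫₀² dx/√(x(2−x)(M²x² − 2Fx + δ²)) is well-defined (the polynomial M²x² − 2Fx + δ² is strictly positive on (0,2)) and strictly increasing in F. -/
open Set MeasureTheory intervalIntegral

lemma quad_pos' (M δ F x : ℝ) (hM : 0 < M) (hδ : 0 < δ)
    (hF : F < if δ ≤ 2 * M then M * δ else M ^ 2 + δ ^ 2 / 4)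
    (hx : x ∈ Set.Icc (0:ℝ) 2) : 0 < M ^ 2 * x ^ 2 - 2 * F * x + δ ^ 2 := by
  obtain ⟨hx0, hx2⟩ := hx
  rcases eq_or_lt_of_le hx0 with h | h
  · subst h; nlinarith
  split_ifs at hF with hd
  · nlinarith [sq_nonneg (M * x - δ)]
  · push_neg at hd
    rcases eq_or_lt_of_le hx2 with h2 | h2
    · subst h2; nlinarith
    · nlinarith [mul_pos (sub_pos.mpr h2) (show (0:ℝ) < δ^2 - 2*M^2*x by nlinarith)]

lemma quad_min (M δ F : ℝ) (hM : 0 < M) (hδ : 0 < δ)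
    (hF : F < if δ ≤ 2 * M then M * δ else M ^ 2 + δ ^ 2 / 4) :
    ∃ m > 0, ∀ x ∈ Set.Icc (0:ℝ) 2, m ≤ M ^ 2 * x ^ 2 - 2 * F * x + δ ^ 2 := by
  have hc : ContinuousOn (fun x : ℝ => M ^ 2 * x ^ 2 - 2 * F * x + δ ^ 2) (Set.Icc 0 2) := by
    fun_prop
  obtain ⟨x0, hx0, hmin⟩ := isCompact_Icc.exists_isMinOn (Set.nonempty_Icc.mpr (by norm_num)) hc
  exact ⟨_, quad_pos' M δ F x0 hM hδ hF hx0, fun x hx => isMinOn_iff.mp hmin x hx⟩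

lemma integrable_period (M δ F m : ℝ) (hm : 0 < m)
    (hQ : ∀ x ∈ Set.Icc (0:ℝ) 2, m ≤ M ^ 2 * x ^ 2 - 2 * F * x + δ ^ 2) :
    IntervalIntegrable
      (fun x => 1 / Real.sqrt (x * (2 - x) * (M ^ 2 * x ^ 2 - 2 * F * x + δ ^ 2)))
      volume 0 2 := by
  set f : ℝ → ℝ := fun x => 1 / Real.sqrt (x * (2 - x) * (M ^ 2 * x ^ 2 - 2 * F * x + δ ^ 2))
    with hf
  have hmeas : Measurable f := by
    apply Measurable.div measurable_const
    exact Real.continuous_sqrt.measurable.comp (by fun_prop)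
  have key : ∀ x, 0 < x → x < 2 → m ≤ (M ^ 2 * x ^ 2 - 2 * F * x + δ ^ 2) := fun x h1 h2 =>
    hQ x ⟨h1.le, h2.le⟩
  have h1 : IntervalIntegrable f volume 0 1 := by
    apply IntervalIntegrable.mono_fun'
      (g := fun x => (Real.sqrt m)⁻¹ * x ^ (-(1/2) : ℝ))
    · exact (intervalIntegrable_rpow' (by norm_num)).const_mul _
    · exact (hmeas.aestronglyMeasurable).restrict
    · rw [Set.uIoc_of_le (by norm_num : (0:ℝ) ≤ 1)]
      filter_upwards [ae_restrict_mem measurableSet_Ioc] with x hx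
      obtain ⟨hx0, hx1⟩ := hx
      have hQx := key x hx0 (by linarith)
      have hle : x * m ≤ x * (2 - x) * (M ^ 2 * x ^ 2 - 2 * F * x + δ ^ 2) := by
        have : m ≤ (2 - x) * (M ^ 2 * x ^ 2 - 2 * F * x + δ ^ 2) := by
          nlinarith
        calc x * m ≤ x * ((2 - x) * (M ^ 2 * x ^ 2 - 2 * F * x + δ ^ 2)) := by
              exact mul_le_mul_of_nonneg_left this hx0.le
          _ = _ := by ring
      have hsp : 0 < Real.sqrt (x * m) := Real.sqrt_pos.mpr (mul_pos hx0 hm)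
      have : ‖f x‖ = f x := Real.norm_of_nonneg (by positivity)
      rw [this, hf]
      calc 1 / Real.sqrt (x * (2 - x) * (M ^ 2 * x ^ 2 - 2 * F * x + δ ^ 2))
          ≤ 1 / Real.sqrt (x * m) :=
            one_div_le_one_div_of_le hsp (Real.sqrt_le_sqrt hle)
        _ = (Real.sqrt m)⁻¹ * x ^ (-(1/2) : ℝ) := by
            rw [Real.sqrt_mul hx0.le, Real.rpow_neg hx0.le, ← Real.sqrt_eq_rpow]
            field_simp
  have h2 : IntervalIntegrable f volume 1 2 := by
    apply IntervalIntegrable.mono_fun'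
      (g := fun x => (Real.sqrt m)⁻¹ * (2 - x) ^ (-(1/2) : ℝ))
    · have := ((intervalIntegrable_rpow' (r := (-(1/2) : ℝ)) (by norm_num)
        (a := (0:ℝ)) (b := (1:ℝ)))).comp_sub_left 2
      norm_num at this
      exact (this.const_mul _).symm
    · exact (hmeas.aestronglyMeasurable).restrict
    · rw [Set.uIoc_of_le (by norm_num : (1:ℝ) ≤ 2)]
      filter_upwards [ae_restrict_mem measurableSet_Ioc] with x hx
      obtain ⟨hx1, hx2⟩ := hx
      have hx0 : (0:ℝ) < x := by linarith
      rcases eq_or_lt_of_le hx2 with he | hlt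
      · subst he
        simp [hf, Real.rpow_neg]
      have h2x : 0 < 2 - x := by linarith
      have hQx := key x hx0 hlt
      have hle : (2 - x) * m ≤ x * (2 - x) * (M ^ 2 * x ^ 2 - 2 * F * x + δ ^ 2) := by
        have : m ≤ x * (M ^ 2 * x ^ 2 - 2 * F * x + δ ^ 2) := by nlinarith
        calc (2 - x) * m ≤ (2 - x) * (x * (M ^ 2 * x ^ 2 - 2 * F * x + δ ^ 2)) :=
              mul_le_mul_of_nonneg_left this h2x.le
          _ = _ := by ring
      have hsp : 0 < Real.sqrt ((2 - x) * m) := Real.sqrt_pos.mpr (mul_pos h2x hm)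
      have : ‖f x‖ = f x := Real.norm_of_nonneg (by positivity)
      rw [this, hf]
      calc 1 / Real.sqrt (x * (2 - x) * (M ^ 2 * x ^ 2 - 2 * F * x + δ ^ 2))
          ≤ 1 / Real.sqrt ((2 - x) * m) :=
            one_div_le_one_div_of_le hsp (Real.sqrt_le_sqrt hle)
        _ = (Real.sqrt m)⁻¹ * (2 - x) ^ (-(1/2) : ℝ) := by
            rw [Real.sqrt_mul h2x.le, Real.rpow_neg h2x.le, ← Real.sqrt_eq_rpow]
            field_simp
  exact h1.trans h2

/-- Below the singular line `Fsing_M(δ)`, the quadratic `M²x² − 2Fx + δ²` is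
strictly positive on `(0,2)`, and the period integral
`F ↦ ∫₀² dx/√(x(2−x)(M²x² − 2Fx + δ²))` is strictly increasing in `F`. -/
theorem period_Tdown_monotone (M δ : ℝ) (hM : 0 < M) (hδ : 0 < δ) :
    let Fsing : ℝ := if δ ≤ 2 * M then M * δ else M ^ 2 + δ ^ 2 / 4
    (∀ F < Fsing, ∀ x ∈ Set.Ioo (0 : ℝ) 2, 0 < M ^ 2 * x ^ 2 - 2 * F * x + δ ^ 2) ∧
    StrictMonoOn (fun F : ℝ =>
        ∫ x in (0 : ℝ)..2,
          1 / Real.sqrt (x * (2 - x) * (M ^ 2 * x ^ 2 - 2 * F * x + δ ^ 2)))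
      (Set.Iio Fsing) := by
  intro Fsing
  constructor
  · exact fun F hF x hx => quad_pos' M δ F x hM hδ hF (Set.Ioo_subset_Icc_self hx)
  · intro F1 hF1 F2 hF2 h12
    obtain ⟨m1, hm1, hQ1⟩ := quad_min M δ F1 hM hδ hF1
    obtain ⟨m2, hm2, hQ2⟩ := quad_min M δ F2 hM hδ hF2
    have hi1 := integrable_period M δ F1 m1 hm1 hQ1
    have hi2 := integrable_period M δ F2 m2 hm2 hQ2
    have hpos : 0 < ∫ x in (0:ℝ)..2,
        (1 / Real.sqrt (x * (2 - x) * (M ^ 2 * x ^ 2 - 2 * F2 * x + δ ^ 2)) -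
         1 / Real.sqrt (x * (2 - x) * (M ^ 2 * x ^ 2 - 2 * F1 * x + δ ^ 2))) := by
      apply intervalIntegral_pos_of_pos_on (hi2.sub hi1) _ (by norm_num)
      intro x hx
      obtain ⟨hx0, hx2⟩ := hx
      have hq2 : 0 < M ^ 2 * x ^ 2 - 2 * F2 * x + δ ^ 2 :=
        quad_pos' M δ F2 x hM hδ hF2 ⟨hx0.le, hx2.le⟩
      have hqlt : M ^ 2 * x ^ 2 - 2 * F2 * x + δ ^ 2 < M ^ 2 * x ^ 2 - 2 * F1 * x + δ ^ 2 := by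
        nlinarith
      have hx2' : 0 < 2 - x := by linarith
      have hp2 : 0 < x * (2 - x) * (M ^ 2 * x ^ 2 - 2 * F2 * x + δ ^ 2) := by positivity
      have hplt : x * (2 - x) * (M ^ 2 * x ^ 2 - 2 * F2 * x + δ ^ 2) <
          x * (2 - x) * (M ^ 2 * x ^ 2 - 2 * F1 * x + δ ^ 2) := by
        apply mul_lt_mul_of_pos_left hqlt (by positivity)
      have hs2 : 0 < Real.sqrt (x * (2 - x) * (M ^ 2 * x ^ 2 - 2 * F2 * x + δ ^ 2)) :=
        Real.sqrt_pos.mpr hp2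
      have := one_div_lt_one_div_of_lt hs2 (Real.sqrt_lt_sqrt hp2.le hplt)
      linarith
    rw [intervalIntegral.integral_sub hi2 hi1] at hpos
    simpa using sub_pos.mp hpos
end

section
/- Let M > 0, δ > 0 with 0 < δ ≤ 2M. As F → (Mδ)⁻, the integral ∫₀² dx/√(x(2−x)(M²x² − 2Fx + δ²)) tends to +∞. -/
open Filter Real Set

lemma aux_ftc (M c ε : ℝ) (hM : 0 < M) (hε : 0 < ε) :
    ∫ x in (0:ℝ)..2, 1 / Real.sqrt (M^2*(x-c)^2 + ε^2)
      = (1/M) * (Real.arsinh (M*(2-c)/ε) - Real.arsinh (M*(0-c)/ε)) := by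
  have hpos : ∀ x : ℝ, 0 < M^2*(x-c)^2 + ε^2 := fun x =>
    add_pos_of_nonneg_of_pos (by positivity) (by positivity)
  have hder : ∀ x : ℝ, HasDerivAt (fun y => (1/M) * Real.arsinh (M*(y-c)/ε))
      (1 / Real.sqrt (M^2*(x-c)^2 + ε^2)) x := by
    intro x
    have h1 : HasDerivAt (fun y : ℝ => M*(y-c)/ε) (M/ε) x := by
      simpa using (((hasDerivAt_id x).sub_const c).const_mul M).div_const ε
    have h2 := (Real.hasDerivAt_arsinh (M*(x-c)/ε)).comp x h1
    have h3 := h2.const_mul (1/M)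
    refine h3.congr_deriv ?_
    have key : Real.sqrt (M^2*(x-c)^2 + ε^2) = ε * Real.sqrt (1 + (M*(x-c)/ε)^2) := by
      rw [← Real.sqrt_sq hε.le, ← Real.sqrt_mul (by positivity)]
      congr 1
      field_simp
      simp only [Real.sqrt_sq hε.le]
      ring
    rw [key]
    have h4 : Real.sqrt (1 + (M*(x-c)/ε)^2) > 0 := Real.sqrt_pos.2 (by positivity)
    field_simp
  have hcont : Continuous fun x : ℝ => 1 / Real.sqrt (M^2*(x-c)^2 + ε^2) := by
    apply continuous_const.div
    · exact Real.continuous_sqrt.comp (by continuity)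
    · exact fun x => ne_of_gt (Real.sqrt_pos.2 (hpos x))
  rw [intervalIntegral.integral_eq_sub_of_hasDerivAt (fun x _ => hder x)
    (hcont.intervalIntegrable 0 2)]
  ring

lemma aux_integrable (q : ℝ → ℝ) (e : ℝ) (he : 0 < e) (hmeas : Measurable q)
    (hq : ∀ x ∈ Icc (0:ℝ) 2, e^2 ≤ q x) :
    IntervalIntegrable (fun x => 1 / Real.sqrt (x*(2-x)*q x)) MeasureTheory.volume 0 2 := by
  have hfm : Measurable fun x => 1 / Real.sqrt (x*(2-x)*q x) :=
    measurable_const.div (Real.continuous_sqrt.measurable.comp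
      ((measurable_id.mul (measurable_const.sub measurable_id)).mul hmeas))
  have h1 : IntervalIntegrable (fun x => 1 / Real.sqrt (x*(2-x)*q x))
      MeasureTheory.volume 0 1 := by
    have hmaj : IntervalIntegrable (fun x : ℝ => (1/e) * x ^ (-(1/2) : ℝ))
        MeasureTheory.volume 0 1 :=
      (intervalIntegral.intervalIntegrable_rpow' (by norm_num)).const_mul _
    refine hmaj.mono_fun hfm.aestronglyMeasurable ?_
    refine MeasureTheory.ae_restrict_of_forall_mem measurableSet_uIoc ?_
    intro x hx
    rw [Set.uIoc_of_le (by norm_num : (0:ℝ) ≤ 1)] at hx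
    obtain ⟨hx0, hx1⟩ := hx
    have hqx := hq x ⟨hx0.le, by linarith⟩
    have hq0 : 0 ≤ q x := le_trans (sq_nonneg e) hqx
    have hlow : x * e^2 ≤ x*(2-x)*q x := by
      nlinarith [mul_nonneg (mul_nonneg hx0.le (sub_nonneg.2 hx1)) hq0,
        mul_le_mul_of_nonneg_left hqx hx0.le]
    have hs : e * Real.sqrt x ≤ Real.sqrt (x*(2-x)*q x) := by
      have := Real.sqrt_le_sqrt hlow
      rwa [show x * e^2 = (Real.sqrt x * e)^2 by
        rw [mul_pow, Real.sq_sqrt hx0.le], Real.sqrt_sq (by positivity), mul_comm] at this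
    have hsp : 0 < e * Real.sqrt x := by positivity
    have hEq : (1/e) * x ^ (-(1/2) : ℝ) = 1/(e * Real.sqrt x) := by
      rw [Real.rpow_neg hx0.le, ← Real.sqrt_eq_rpow]
      field_simp
    show ‖1 / Real.sqrt (x*(2-x)*q x)‖ ≤ ‖(1/e) * x ^ (-(1/2) : ℝ)‖
    rw [hEq, Real.norm_eq_abs, Real.norm_eq_abs, abs_of_nonneg (by positivity),
      abs_of_nonneg (by positivity)]
    exact one_div_le_one_div_of_le hsp hs
  have h2 : IntervalIntegrable (fun x => 1 / Real.sqrt (x*(2-x)*q x))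
      MeasureTheory.volume 1 2 := by
    have hmaj : IntervalIntegrable (fun x : ℝ => (1/e) * (2-x) ^ (-(1/2) : ℝ))
        MeasureTheory.volume 1 2 := by
      have := ((intervalIntegral.intervalIntegrable_rpow'
        (by norm_num : (-1:ℝ) < -(1/2))).comp_sub_left (c := 2) (a := 0) (b := 1))
      norm_num at this
      exact this.symm.const_mul _
    refine hmaj.mono_fun hfm.aestronglyMeasurable ?_
    refine MeasureTheory.ae_restrict_of_forall_mem measurableSet_uIoc ?_
    intro x hx
    rw [Set.uIoc_of_le (by norm_num : (1:ℝ) ≤ 2)] at hx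
    obtain ⟨hx1, hx2⟩ := hx
    have hqx := hq x ⟨by linarith, hx2⟩
    have hq0 : 0 ≤ q x := le_trans (sq_nonneg e) hqx
    rcases eq_or_lt_of_le hx2 with rfl | hx2lt
    · simp [Real.norm_eq_abs]
    have h2x : 0 < 2 - x := by linarith
    have hlow : (2-x) * e^2 ≤ x*(2-x)*q x := by
      nlinarith [mul_nonneg (mul_nonneg h2x.le (sub_nonneg.2 hx1.le)) hq0,
        mul_le_mul_of_nonneg_left hqx h2x.le]
    have hs : e * Real.sqrt (2-x) ≤ Real.sqrt (x*(2-x)*q x) := by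
      have := Real.sqrt_le_sqrt hlow
      rwa [show (2-x) * e^2 = (Real.sqrt (2-x) * e)^2 by
        rw [mul_pow, Real.sq_sqrt h2x.le], Real.sqrt_sq (by positivity), mul_comm] at this
    have hsp : 0 < e * Real.sqrt (2-x) := by positivity
    have hEq : (1/e) * (2-x) ^ (-(1/2) : ℝ) = 1/(e * Real.sqrt (2-x)) := by
      rw [Real.rpow_neg h2x.le, ← Real.sqrt_eq_rpow]
      field_simp
    show ‖1 / Real.sqrt (x*(2-x)*q x)‖ ≤ ‖(1/e) * (2-x) ^ (-(1/2) : ℝ)‖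
    rw [hEq, Real.norm_eq_abs, Real.norm_eq_abs, abs_of_nonneg (by positivity),
      abs_of_nonneg (by positivity)]
    exact one_div_le_one_div_of_le hsp hs
  exact h1.trans h2

lemma aux_compare (q : ℝ → ℝ) (e : ℝ) (he : 0 < e) (hcont : Continuous q)
    (hq : ∀ x, e^2 ≤ q x) :
    (∫ x in (0:ℝ)..2, 1 / Real.sqrt (q x)) ≤
      ∫ x in (0:ℝ)..2, 1 / Real.sqrt (x*(2-x)*q x) := by
  have hqpos : ∀ x, 0 < q x := fun x => lt_of_lt_of_le (by positivity) (hq x)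
  have hf : IntervalIntegrable (fun x => 1 / Real.sqrt (q x)) MeasureTheory.volume 0 2 := by
    refine (continuous_const.div (Real.continuous_sqrt.comp hcont)
      fun x => ne_of_gt (Real.sqrt_pos.2 (hqpos x))).intervalIntegrable 0 2
  have hg := aux_integrable q e he hcont.measurable (fun x _ => hq x)
  refine intervalIntegral.integral_mono_ae_restrict (by norm_num) hf hg ?_
  have hne : ∀ᵐ x : ℝ ∂MeasureTheory.volume, x ∉ ({0, 2} : Set ℝ) :=
    ((Set.finite_singleton (2:ℝ)).insert 0).countable.ae_notMem _
  filter_upwards [MeasureTheory.ae_restrict_of_ae hne,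
    MeasureTheory.ae_restrict_mem measurableSet_Icc] with x hx hxIcc
  obtain ⟨hx0, hx2⟩ := hxIcc
  have hx0' : 0 < x := lt_of_le_of_ne hx0 (by simp at hx; exact Ne.symm hx.1)
  have hx2' : x < 2 := lt_of_le_of_ne hx2 (by simp at hx; exact hx.2)
  have hle1 : x * (2 - x) ≤ 1 := by nlinarith [sq_nonneg (x-1)]
  have hposx : 0 < x * (2 - x) := by nlinarith
  have h1 : x * (2 - x) * q x ≤ q x := by
    calc x * (2 - x) * q x ≤ 1 * q x :=
        mul_le_mul_of_nonneg_right hle1 (hqpos x).le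
      _ = q x := one_mul _
  have h2 : 0 < x * (2 - x) * q x := mul_pos hposx (hqpos x)
  exact one_div_le_one_div_of_le (Real.sqrt_pos.2 h2) (Real.sqrt_le_sqrt h1)

/-- For `0 < δ ≤ 2M`, the integral `∫₀² dx/√(x(2−x)(M²x² − 2Fx + δ²))` tends
to `+∞` as `F → (Mδ)⁻`. -/
theorem period_Tdown_diverges_at_singular_line (M δ : ℝ)
    (hM : 0 < M) (hδ : 0 < δ) (hδ2M : δ ≤ 2 * M) :
    Tendsto (fun F : ℝ =>
        ∫ x in (0 : ℝ)..2,
          1 / Real.sqrt (x * (2 - x) * (M ^ 2 * x ^ 2 - 2 * F * x + δ ^ 2)))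
      (nhdsWithin (M * δ) (Set.Iio (M * δ))) atTop := by
  have hMδ : 0 < M * δ := mul_pos hM hδ
  set l := nhdsWithin (M * δ) (Set.Iio (M * δ)) with hl
  set eps : ℝ → ℝ := fun F => Real.sqrt (δ^2 - F^2/M^2) with heps
  set φ : ℝ → ℝ := fun F => (1/M) * Real.arsinh (F / M / eps F) with hφ
  have hmem : Set.Ioo 0 (M*δ) ∈ l := Ioo_mem_nhdsLT hMδ
  -- positivity of eps on Ioo 0 (Mδ)
  have hepos : ∀ F ∈ Set.Ioo (0:ℝ) (M*δ), 0 < δ^2 - F^2/M^2 := by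
    intro F hF
    obtain ⟨hF0, hF1⟩ := hF
    have h1 : F^2 < (M*δ)^2 := by nlinarith
    rw [sub_pos, div_lt_iff₀ (by positivity)]
    nlinarith
  -- Step 1: φ tendsto atTop
  have hstep1 : Tendsto φ l atTop := by
    have htF : Tendsto (fun F : ℝ => F) l (nhds (M*δ)) :=
      tendsto_id.mono_left nhdsWithin_le_nhds
    have hteps : Tendsto eps l (nhdsWithin 0 (Set.Ioi 0)) := by
      rw [tendsto_nhdsWithin_iff]
      constructor
      · have : Tendsto (fun F : ℝ => Real.sqrt (δ^2 - F^2/M^2)) l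
            (nhds (Real.sqrt (δ^2 - (M*δ)^2/M^2))) := by
          exact (Real.continuous_sqrt.comp (by continuity)).tendsto (M*δ) |>.mono_left
            nhdsWithin_le_nhds
        convert this using 2
        rw [show δ^2 - (M*δ)^2/M^2 = 0 by field_simp; ring, Real.sqrt_zero]
      · filter_upwards [hmem] with F hF
        exact Real.sqrt_pos.2 (hepos F hF)
    have hinv : Tendsto (fun F => (eps F)⁻¹) l atTop :=
      tendsto_inv_nhdsGT_zero.comp hteps
    have hnum : Tendsto (fun F : ℝ => F / M) l (nhds δ) := by
      have := htF.div_const M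
      rwa [show M * δ / M = δ by field_simp] at this
    have hratio : Tendsto (fun F => F / M / eps F) l atTop := by
      have := hnum.pos_mul_atTop hδ hinv
      simpa [div_eq_mul_inv] using this
    have harsinh : Tendsto Real.arsinh atTop atTop :=
      tendsto_atTop_atTop_of_monotone Real.arsinh_strictMono.monotone
        (fun b => ⟨Real.sinh b, (Real.arsinh_sinh b).ge⟩)
    exact (harsinh.comp hratio).const_mul_atTop (by positivity)
  -- Step 2: eventual inequality
  refine tendsto_atTop_mono' l ?_ hstep1
  filter_upwards [hmem] with F hF
  obtain ⟨hF0, hF1⟩ := hF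
  set c : ℝ := F / M^2 with hc
  set e : ℝ := eps F with he
  have hepos' : 0 < δ^2 - F^2/M^2 := hepos F ⟨hF0, hF1⟩
  have he0 : 0 < e := Real.sqrt_pos.2 hepos'
  have he2 : e^2 = δ^2 - F^2/M^2 := Real.sq_sqrt hepos'.le
  have hqeq : ∀ x : ℝ, M^2*x^2 - 2*F*x + δ^2 = M^2*(x - c)^2 + e^2 := by
    intro x
    rw [he2, hc]
    field_simp
    ring
  have hq : ∀ x : ℝ, e^2 ≤ M^2*x^2 - 2*F*x + δ^2 := by
    intro x
    rw [hqeq x]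
    nlinarith [sq_nonneg (M*(x-c))]
  have hcmp := aux_compare (fun x => M^2*x^2 - 2*F*x + δ^2) e he0 (by continuity) hq
  have hftc : (∫ x in (0:ℝ)..2, 1 / Real.sqrt (M^2*x^2 - 2*F*x + δ^2))
      = (1/M) * (Real.arsinh (M*(2-c)/e) - Real.arsinh (M*(0-c)/e)) := by
    rw [← aux_ftc M c e hM he0]
    exact intervalIntegral.integral_congr fun x _ => by rw [hqeq x]
  have hc2 : c ≤ 2 := by
    rw [hc, div_le_iff₀ (by positivity)]
    nlinarith
  have hA : 0 ≤ Real.arsinh (M*(2-c)/e) :=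
    Real.arsinh_nonneg_iff.2 (div_nonneg (mul_nonneg hM.le (by linarith)) he0.le)
  have hB : Real.arsinh (M*(0-c)/e) = - Real.arsinh (M*c/e) := by
    rw [show M*(0-c)/e = -(M*c/e) by ring, Real.arsinh_neg]
  have hMc : M * c / e = F / M / e := by
    rw [hc]
    field_simp
  have hfinal : φ F ≤ ∫ x in (0:ℝ)..2, 1 / Real.sqrt (M^2*x^2 - 2*F*x + δ^2) := by
    rw [hftc, hB]
    show (1/M) * Real.arsinh (F / M / eps F) ≤ _
    rw [← he, ← hMc]
    have : Real.arsinh (M*c/e) ≤ Real.arsinh (M*(2-c)/e) - - Real.arsinh (M*c/e) := by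
      linarith
    exact mul_le_mul_of_nonneg_left this (by positivity)
  exact le_trans hfinal hcmp
end

section
/- Let M > 0, δ > 0, F > Fsing_M(δ). The function F ↦ ∫₀¹ dt/√(M² t(1−t)(2 − x₋(F) t)(x₊(F) − x₋(F) t)) is strictly decreasing in F, where x₋(F) < x₊(F) are the roots of M²x² − 2Fx + δ². -/
open MeasureTheory Set intervalIntegral

lemma aux_integrable_s12 (M c d : ℝ) (hM : 0 < M) (hc0 : 0 < c) (hc2 : c < 2) (hcd : c < d) :
    IntervalIntegrable
      (fun t => 1 / Real.sqrt (M ^ 2 * t * (1 - t) * (2 - c * t) * (d - c * t)))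
      volume 0 1 := by
  set f : ℝ → ℝ := fun t => 1 / Real.sqrt (M ^ 2 * t * (1 - t) * (2 - c * t) * (d - c * t))
    with hfdef
  have hmeas : Measurable f := by
    apply Measurable.div measurable_const
    exact (Real.continuous_sqrt.comp (by continuity)).measurable
  have h2c : (0:ℝ) < 2 - c := by linarith
  have hdc : (0:ℝ) < d - c := by linarith
  have hfnn : ∀ t, 0 ≤ f t := fun t => by positivity
  set q : ℝ := M ^ 2 * (1 / 2) * (2 - c) * (d - c) with hqdef
  have hq : 0 < q := by positivity
  have hbound : ∀ t, 0 < t → t < 1 → ∀ u : ℝ, 0 < u →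
      q * u ≤ M ^ 2 * t * (1 - t) * (2 - c * t) * (d - c * t) →
      f t ≤ (Real.sqrt q)⁻¹ * u ^ (-(1/2) : ℝ) := by
    intro t ht0 ht1 u hu hle
    have hqu : 0 < q * u := by positivity
    have h1 : f t ≤ 1 / Real.sqrt (q * u) := by
      apply one_div_le_one_div_of_le (Real.sqrt_pos.mpr hqu)
      exact Real.sqrt_le_sqrt hle
    have h2 : Real.sqrt (q * u) = Real.sqrt q * Real.sqrt u :=
      Real.sqrt_mul hq.le u
    have h3 : (Real.sqrt u)⁻¹ = u ^ (-(1/2) : ℝ) := by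
      rw [Real.sqrt_eq_rpow, ← Real.rpow_neg hu.le]
    calc f t ≤ 1 / Real.sqrt (q * u) := h1
      _ = (Real.sqrt q)⁻¹ * (Real.sqrt u)⁻¹ := by
          rw [h2, one_div, mul_inv]
      _ = (Real.sqrt q)⁻¹ * u ^ (-(1/2) : ℝ) := by rw [h3]
  have half1 : IntervalIntegrable f volume 0 (1/2) := by
    have hg : IntervalIntegrable (fun t : ℝ => (Real.sqrt q)⁻¹ * t ^ (-(1/2) : ℝ))
        volume 0 (1/2) :=
      (intervalIntegrable_rpow' (by norm_num)).const_mul _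
    apply hg.mono_fun' hmeas.aestronglyMeasurable
    have hI : uIoc (0:ℝ) (1/2) = Ioc (0:ℝ) (1/2) := uIoc_of_le (by norm_num)
    rw [hI]
    filter_upwards [ae_restrict_mem measurableSet_Ioc] with t ht
    have ht0 : 0 < t := ht.1
    have ht1 : t < 1 := lt_of_le_of_lt ht.2 (by norm_num)
    have ht2 : t ≤ 1/2 := ht.2
    have hDle : q * t ≤ M ^ 2 * t * (1 - t) * (2 - c * t) * (d - c * t) := by
      have e : q * t = M ^ 2 * t * (1/2) * (2 - c) * (d - c) := by ring
      rw [e]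
      have hct : c * t ≤ c := by nlinarith
      have h1t : (0:ℝ) < 1 - t := by linarith
      have h2ct : (0:ℝ) < 2 - c * t := by linarith
      have hA : 0 < M ^ 2 * t * (1 - t) * (2 - c * t) := by positivity
      have hB : 0 < M ^ 2 * t * (1 - t) := by positivity
      gcongr <;> first | positivity | linarith
    have := hbound t ht0 ht1 t ht0 hDle
    simpa [Real.norm_eq_abs, abs_of_nonneg (hfnn t)] using this
  have half2 : IntervalIntegrable f volume (1/2) 1 := by
    have hg0 : IntervalIntegrable (fun t : ℝ => t ^ (-(1/2) : ℝ)) volume (1/2) 0 :=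
      intervalIntegrable_rpow' (by norm_num)
    have hg1 := hg0.comp_sub_left 1
    norm_num at hg1
    have hg : IntervalIntegrable (fun t : ℝ => (Real.sqrt q)⁻¹ * (1 - t) ^ (-(1/2) : ℝ))
        volume (1/2) 1 := hg1.const_mul _
    apply hg.mono_fun' hmeas.aestronglyMeasurable
    have hI : uIoc (1/2 : ℝ) 1 = Ioc (1/2 : ℝ) 1 := uIoc_of_le (by norm_num)
    rw [hI]
    filter_upwards [ae_restrict_mem measurableSet_Ioc] with t ht
    have ht0 : (0:ℝ) < t := lt_trans (by norm_num) ht.1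
    rcases eq_or_lt_of_le ht.2 with h | ht1
    · subst h
      have : f 1 = 0 := by norm_num [hfdef]
      rw [this]
      simp [Real.zero_rpow]
    · have hthalf : 1/2 ≤ t := ht.1.le
      have hDle : q * (1 - t) ≤ M ^ 2 * t * (1 - t) * (2 - c * t) * (d - c * t) := by
        have e : q * (1 - t) = M ^ 2 * (1/2) * (1 - t) * (2 - c) * (d - c) := by ring
        rw [e]
        have hct : c * t ≤ c := by nlinarith
        have h1t : (0:ℝ) < 1 - t := by linarith
        have h2ct : (0:ℝ) < 2 - c * t := by linarith
        have hA : 0 < M ^ 2 * (1/2) * (1 - t) * (2 - c * t) := by positivity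
        have hA' : 0 < M ^ 2 * t * (1 - t) * (2 - c * t) := by positivity
        have hB : 0 < M ^ 2 * (1/2) * (1 - t) := by positivity
        have hB' : 0 < M ^ 2 * t * (1 - t) := by positivity
        gcongr <;> first | positivity | linarith
      have := hbound t ht0 ht1 (1 - t) (by linarith) hDle
      simpa [Real.norm_eq_abs, abs_of_nonneg (hfnn t)] using this
  exact half1.trans half2

set_option maxHeartbeats 1000000 in
/-- Above the singular line, the period integral
`F ↦ ∫₀¹ dt/√(M²t(1−t)(2 − x₋(F)t)(x₊(F) − x₋(F)t))` is strictly decreasing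
in `F`, where `x₋(F) < x₊(F)` are the roots of `M²x² − 2Fx + δ²`. -/
theorem period_Tup_antitone (M δ : ℝ) (hM : 0 < M) (hδ : 0 < δ) :
    let Fsing : ℝ := if δ ≤ 2 * M then M * δ else M ^ 2 + δ ^ 2 / 4
    let xm : ℝ → ℝ := fun F => F / M ^ 2 - Real.sqrt (F ^ 2 / M ^ 4 - δ ^ 2 / M ^ 2)
    let xp : ℝ → ℝ := fun F => F / M ^ 2 + Real.sqrt (F ^ 2 / M ^ 4 - δ ^ 2 / M ^ 2)
    StrictAntiOn (fun F : ℝ =>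
        ∫ t in (0 : ℝ)..1,
          1 / Real.sqrt (M ^ 2 * t * (1 - t) * (2 - xm F * t) * (xp F - xm F * t)))
      (Set.Ioi Fsing) := by
  intro Fsing xm xp
  intro F₁ hF₁ F₂ hF₂ h12
  simp only [Set.mem_Ioi] at hF₁ hF₂
  have hM2 : (0:ℝ) < M ^ 2 := by positivity
  have hM4 : (0:ℝ) < M ^ 4 := by positivity
  -- Fsing ≥ M δ
  have hFsing : M * δ ≤ Fsing := by
    simp only [Fsing]
    split_ifs with h
    · exact le_refl _
    · nlinarith [sq_nonneg (M - δ / 2)]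
  -- basic facts for F ∈ Ioi Fsing
  have key : ∀ F : ℝ, Fsing < F →
      0 < F ^ 2 / M ^ 4 - δ ^ 2 / M ^ 2 := by
    intro F hF
    have hMδF : M * δ < F := lt_of_le_of_lt hFsing hF
    have h1 : 0 < F := lt_trans (by positivity) hMδF
    have h2 : δ ^ 2 * M ^ 2 < F ^ 2 := by
      have := mul_self_lt_mul_self (by positivity : (0:ℝ) ≤ M * δ) hMδF
      nlinarith [this]
    have : F ^ 2 / M ^ 4 - δ ^ 2 / M ^ 2 = (F ^ 2 - δ ^ 2 * M ^ 2) / M ^ 4 := by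
      field_simp
    rw [this]
    apply div_pos (by linarith) hM4
  have hs1 := key F₁ hF₁
  have hs2 := key F₂ hF₂
  set s : ℝ → ℝ := fun F => Real.sqrt (F ^ 2 / M ^ 4 - δ ^ 2 / M ^ 2) with hsdef
  have hspos : ∀ F : ℝ, Fsing < F → 0 < s F := fun F hF => Real.sqrt_pos.mpr (key F hF)
  have hssq : ∀ F : ℝ, Fsing < F → (s F) ^ 2 = F ^ 2 / M ^ 4 - δ ^ 2 / M ^ 2 :=
    fun F hF => Real.sq_sqrt (key F hF).le
  have hFpos : ∀ F : ℝ, Fsing < F → 0 < F := fun F hF =>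
    lt_trans (by positivity) (lt_of_le_of_lt hFsing hF)
  have hprod : ∀ F : ℝ, Fsing < F → xm F * xp F = δ ^ 2 / M ^ 2 := by
    intro F hF
    have h := hssq F hF
    show (F / M ^ 2 - s F) * (F / M ^ 2 + s F) = δ ^ 2 / M ^ 2
    have expand : (F / M ^ 2 - s F) * (F / M ^ 2 + s F) = F ^ 2 / M ^ 4 - s F ^ 2 := by
      ring
    rw [expand, h]
    ring
  have hxp_pos : ∀ F : ℝ, Fsing < F → 0 < xp F := by
    intro F hF
    have h1 := hspos F hF
    have h2 := hFpos F hF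
    show 0 < F / M ^ 2 + s F
    have : 0 < F / M ^ 2 := by positivity
    linarith
  have hxm_eq : ∀ F : ℝ, Fsing < F → xm F = (δ ^ 2 / M ^ 2) / xp F := by
    intro F hF
    rw [← hprod F hF]
    field_simp [(hxp_pos F hF).ne']
  have hxm_pos : ∀ F : ℝ, Fsing < F → 0 < xm F := by
    intro F hF
    rw [hxm_eq F hF]
    exact div_pos (by positivity) (hxp_pos F hF)
  have hxm_lt_xp : ∀ F : ℝ, Fsing < F → xm F < xp F := by
    intro F hF
    have := hspos F hF
    show F / M ^ 2 - s F < F / M ^ 2 + s F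
    linarith
  -- xp strictly increasing
  have hxp_mono : xp F₁ < xp F₂ := by
    have hsle : s F₁ ≤ s F₂ := by
      apply Real.sqrt_le_sqrt
      have h1 : 0 < F₁ := hFpos F₁ hF₁
      have : F₁ ^ 2 ≤ F₂ ^ 2 := by nlinarith
      have := hM4
      gcongr
    have hdd : F₁ / M ^ 2 < F₂ / M ^ 2 := div_lt_div_of_pos_right h12 hM2
    show F₁ / M ^ 2 + s F₁ < F₂ / M ^ 2 + s F₂
    linarith
  -- xm strictly decreasing
  have hxm_mono : xm F₂ < xm F₁ := by
    rw [hxm_eq F₁ hF₁, hxm_eq F₂ hF₂]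
    exact div_lt_div_of_pos_left (by positivity) (hxp_pos F₁ hF₁) hxp_mono
  -- xm < 2
  have hxm_lt2 : ∀ F : ℝ, Fsing < F → xm F < 2 := by
    intro F hF
    rcases le_or_gt F (2 * M ^ 2) with hle | hgt
    · have h1 : F / M ^ 2 ≤ 2 := by
        rw [div_le_iff₀ hM2]; linarith
      have h2 := hspos F hF
      show F / M ^ 2 - s F < 2
      linarith
    · have hFbig : M ^ 2 + δ ^ 2 / 4 < F := by
        simp only [Fsing] at hF
        split_ifs at hF with h
        · nlinarith
        · exact hF
      have h1 : (F / M ^ 2 - 2) ^ 2 < F ^ 2 / M ^ 4 - δ ^ 2 / M ^ 2 := by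
        have e : (F / M ^ 2 - 2) ^ 2 - (F ^ 2 / M ^ 4 - δ ^ 2 / M ^ 2)
            = (4 * M ^ 2 + δ ^ 2 - 4 * F) / M ^ 2 := by
          field_simp
          ring
        have hneg : (4 * M ^ 2 + δ ^ 2 - 4 * F) / M ^ 2 < 0 :=
          div_neg_of_neg_of_pos (by linarith) hM2
        linarith [e, hneg]
      have h2 : F / M ^ 2 - 2 < s F := by
        have h0 : 0 ≤ F / M ^ 2 - 2 := by
          rw [sub_nonneg, le_div_iff₀ hM2]
          linarith
        calc F / M ^ 2 - 2 = Real.sqrt ((F / M ^ 2 - 2) ^ 2) := (Real.sqrt_sq h0).symm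
          _ < s F := by
            exact Real.sqrt_lt_sqrt (by positivity) h1
      show F / M ^ 2 - s F < 2
      linarith
  -- integrability
  have hint : ∀ F : ℝ, Fsing < F → IntervalIntegrable
      (fun t => 1 / Real.sqrt (M ^ 2 * t * (1 - t) * (2 - xm F * t) * (xp F - xm F * t)))
      MeasureTheory.volume 0 1 := by
    intro F hF
    exact aux_integrable_s12 M (xm F) (xp F) hM (hxm_pos F hF) (hxm_lt2 F hF) (hxm_lt_xp F hF)
  have h1i := hint F₁ hF₁
  have h2i := hint F₂ hF₂
  -- pointwise strict inequality on (0,1)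
  have hpt : ∀ t ∈ Set.Ioo (0:ℝ) 1,
      0 < 1 / Real.sqrt (M ^ 2 * t * (1 - t) * (2 - xm F₁ * t) * (xp F₁ - xm F₁ * t))
          - 1 / Real.sqrt (M ^ 2 * t * (1 - t) * (2 - xm F₂ * t) * (xp F₂ - xm F₂ * t)) := by
    intro t ht
    obtain ⟨ht0, ht1⟩ := ht
    have hm1 := hxm_pos F₁ hF₁
    have hm2 := hxm_pos F₂ hF₂
    have h21 := hxm_lt2 F₁ hF₁
    have hlt1 := hxm_lt_xp F₁ hF₁
    have hmt1 : xm F₁ * t < xm F₁ := mul_lt_of_lt_one_right hm1 ht1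
    have hA1 : 0 < 2 - xm F₁ * t := by linarith
    have hB1 : 0 < xp F₁ - xm F₁ * t := by linarith
    have h1t : (0:ℝ) < 1 - t := by linarith
    have hD1 : 0 < M ^ 2 * t * (1 - t) * (2 - xm F₁ * t) * (xp F₁ - xm F₁ * t) :=
      mul_pos (mul_pos (mul_pos (mul_pos hM2 ht0) h1t) hA1) hB1
    have hDlt : M ^ 2 * t * (1 - t) * (2 - xm F₁ * t) * (xp F₁ - xm F₁ * t)
        < M ^ 2 * t * (1 - t) * (2 - xm F₂ * t) * (xp F₂ - xm F₂ * t) := by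
      have hP : 0 < M ^ 2 * t * (1 - t) := mul_pos (mul_pos hM2 ht0) h1t
      have hmt12 : xm F₂ * t < xm F₁ * t := mul_lt_mul_of_pos_right hxm_mono ht0
      have hA : 2 - xm F₁ * t < 2 - xm F₂ * t := by linarith
      have hB : xp F₁ - xm F₁ * t < xp F₂ - xm F₂ * t := by linarith
      have step1 : M ^ 2 * t * (1 - t) * (2 - xm F₁ * t)
          < M ^ 2 * t * (1 - t) * (2 - xm F₂ * t) := mul_lt_mul_of_pos_left hA hP
      have hPA1 : 0 < M ^ 2 * t * (1 - t) * (2 - xm F₁ * t) := mul_pos hP hA1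
      exact mul_lt_mul'' step1 hB hPA1.le hB1.le
    have hsqlt : Real.sqrt (M ^ 2 * t * (1 - t) * (2 - xm F₁ * t) * (xp F₁ - xm F₁ * t))
        < Real.sqrt (M ^ 2 * t * (1 - t) * (2 - xm F₂ * t) * (xp F₂ - xm F₂ * t)) :=
      Real.sqrt_lt_sqrt hD1.le hDlt
    have hsq1 : 0 < Real.sqrt (M ^ 2 * t * (1 - t) * (2 - xm F₁ * t) * (xp F₁ - xm F₁ * t)) :=
      Real.sqrt_pos.mpr hD1
    have := one_div_lt_one_div_of_lt hsq1 hsqlt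
    linarith
  -- conclude
  have hsub : IntervalIntegrable
      (fun t => 1 / Real.sqrt (M ^ 2 * t * (1 - t) * (2 - xm F₁ * t) * (xp F₁ - xm F₁ * t))
        - 1 / Real.sqrt (M ^ 2 * t * (1 - t) * (2 - xm F₂ * t) * (xp F₂ - xm F₂ * t)))
      MeasureTheory.volume 0 1 := h1i.sub h2i
  have hpos := intervalIntegral_pos_of_pos_on hsub hpt one_pos
  rw [intervalIntegral.integral_sub h1i h2i] at hpos
  simp only
  linarith
end
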